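/- Under the hypotheses of the previous transport identity, for each t ≥ t₁: ∫_ℝ ∫_{S^{n-1}} |m(t,s,ω)|² ds dω ≥ ∫_{2ρ}^∞ ∫_{S^{n-1}} |m(t₁,s,ω)|² ds dω. Consequently, if ‖m(t_k,·,·)‖_{L²} → 0 along a sequence t_k → ∞, then m(t₁, s, ω) = 0 for s ≥ 2ρ and almost every ω. -/

import Mathlib

open MeasureTheory Filter

/-- Under the transport hypotheses `(∂_t + τ(ω) ∂_s) m = l` with
`l(t,s,ω) = 0` for `t ≥ t₁`, `s ≥ 2ρ + τ(ω)(t - t₁)`, the `L²` norm of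
`m(t,·,·)` dominates the `L²` norm of `m(t₁,·,·)` on `{s ≥ 2ρ}`; hence if the
`L²` norms vanish along a sequence `t_k → ∞`, then `m(t₁,s,ω) = 0` for a.e.
`s ≥ 2ρ` and a.e. `ω`. -/
theorem transport_L2_monotonicity_and_vanishing
    {Ω : Type*} [MeasurableSpace Ω] (μ : Measure Ω)
    (τ : Ω → ℝ) (hτ : ∀ ω, 0 < τ ω) (hτmeas : Measurable τ)
    (v : ℝ) (hv : 0 < v) (hvτ : ∀ ω, v ≤ τ ω)
    (ρ t₁ : ℝ) (hρ : 0 < ρ) (ht₁ : 0 ≤ t₁)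
    (m l : ℝ → ℝ → Ω → ℂ)
    (hmeas : ∀ t : ℝ, Measurable (fun p : ℝ × Ω => m t p.1 p.2))
    (hpde : ∀ ω : Ω, ∀ t s : ℝ,
      HasDerivAt (fun u : ℝ => m (t + u) (s + τ ω * u) ω) (l t s ω) 0)
    (hl : ∀ ω : Ω, ∀ t s : ℝ, t₁ ≤ t → 2 * ρ + τ ω * (t - t₁) ≤ s → l t s ω = 0) :
    (∀ t : ℝ, t₁ ≤ t →
      (∫⁻ ω, ∫⁻ s in Set.Ioi (2 * ρ), (‖m t₁ s ω‖₊ : ENNReal) ^ 2 ∂volume ∂μ) ≤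
        ∫⁻ ω, ∫⁻ s, (‖m t s ω‖₊ : ENNReal) ^ 2 ∂volume ∂μ) ∧
    (∀ tk : ℕ → ℝ, Tendsto tk atTop atTop → (∀ k, t₁ ≤ tk k) →
      Tendsto (fun k => ∫⁻ ω, ∫⁻ s, (‖m (tk k) s ω‖₊ : ENNReal) ^ 2 ∂volume ∂μ)
        atTop (nhds 0) →
      ∀ᵐ ω ∂μ, ∀ᵐ s ∂(volume.restrict (Set.Ioi (2 * ρ))), m t₁ s ω = 0) := by
  -- derivative of the characteristic function at any nonnegative time is zero
  have hderiv : ∀ ω s, 2 * ρ ≤ s → ∀ u₀ : ℝ, 0 ≤ u₀ →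
      HasDerivAt (fun u : ℝ => m (t₁ + u) (s + τ ω * u) ω) 0 u₀ := by
    intro ω s hs u₀ hu₀
    have h := hpde ω (t₁ + u₀) (s + τ ω * u₀)
    have hL : l (t₁ + u₀) (s + τ ω * u₀) ω = 0 := by
      apply hl ω (t₁ + u₀) (s + τ ω * u₀) (by linarith)
      have : τ ω * (t₁ + u₀ - t₁) = τ ω * u₀ := by ring
      rw [this]; linarith
    rw [hL] at h
    have h2 : HasDerivAt (fun u : ℝ => m (t₁ + (u₀ + u)) (s + τ ω * (u₀ + u)) ω) 0 0 := by
      have hfun : (fun u : ℝ => m (t₁ + (u₀ + u)) (s + τ ω * (u₀ + u)) ω)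
          = fun u : ℝ => m (t₁ + u₀ + u) (s + τ ω * u₀ + τ ω * u) ω := by
        funext u
        have e1 : t₁ + (u₀ + u) = t₁ + u₀ + u := by ring
        have e2 : s + τ ω * (u₀ + u) = s + τ ω * u₀ + τ ω * u := by ring
        rw [e1, e2]
      rw [hfun]
      exact h
    have h3 : HasDerivAt (fun x : ℝ => x - u₀) 1 u₀ :=
      (hasDerivAt_id u₀).sub_const u₀
    have h4 : HasDerivAt
        ((fun u : ℝ => m (t₁ + (u₀ + u)) (s + τ ω * (u₀ + u)) ω) ∘ (fun x : ℝ => x - u₀))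
        ((1 : ℝ) • (0 : ℂ)) u₀ := HasDerivAt.scomp_of_eq u₀ h2 h3 (by ring)
    have hfun2 : ((fun u : ℝ => m (t₁ + (u₀ + u)) (s + τ ω * (u₀ + u)) ω) ∘
        (fun x : ℝ => x - u₀)) = fun u : ℝ => m (t₁ + u) (s + τ ω * u) ω := by
      funext x
      simp only [Function.comp]
      have e1 : t₁ + (u₀ + (x - u₀)) = t₁ + x := by ring
      have e2 : s + τ ω * (u₀ + (x - u₀)) = s + τ ω * x := by ring
      rw [e1, e2]
    rw [hfun2] at h4
    simpa using h4
  -- constancy along characteristics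
  have hconst : ∀ ω s, 2 * ρ ≤ s → ∀ t, t₁ ≤ t →
      m t (s + τ ω * (t - t₁)) ω = m t₁ s ω := by
    intro ω s hs t ht
    have hT : (0 : ℝ) ≤ t - t₁ := by linarith
    set g : ℝ → ℂ := fun u => m (t₁ + u) (s + τ ω * u) ω with hg
    have key : ∀ x ∈ Set.Icc (0 : ℝ) (t - t₁), g x = g 0 := by
      apply constant_of_has_deriv_right_zero
      · intro x hx
        exact ((hderiv ω s hs x hx.1).continuousAt).continuousWithinAt
      · intro x hx
        exact ((hderiv ω s hs x hx.1).hasDerivWithinAt)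
    have h0 : g (t - t₁) = g 0 := key _ ⟨hT, le_refl _⟩
    simp only [hg] at h0
    have e1 : t₁ + (t - t₁) = t := by ring
    rw [e1] at h0
    simpa using h0
  constructor
  · -- L² monotonicity
    intro t ht
    apply lintegral_mono
    intro ω
    set c : ℝ := τ ω * (t - t₁) with hc
    have hc0 : 0 ≤ c := mul_nonneg (hτ ω).le (by linarith)
    have hmeq : ∀ s ∈ Set.Ioi (2 * ρ), (‖m t₁ s ω‖₊ : ENNReal) ^ 2
        = (‖m t (s + c) ω‖₊ : ENNReal) ^ 2 := by
      intro s hs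
      rw [hconst ω s (le_of_lt hs) t ht]
    have hmeasω : Measurable fun s => (‖m t s ω‖₊ : ENNReal) ^ 2 := by
      have : Measurable fun s : ℝ => m t s ω :=
        (hmeas t).comp (measurable_id.prodMk measurable_const)
      exact (this.nnnorm.coe_nnreal_ennreal).pow_const 2
    calc ∫⁻ s in Set.Ioi (2 * ρ), (‖m t₁ s ω‖₊ : ENNReal) ^ 2 ∂volume
        = ∫⁻ s in Set.Ioi (2 * ρ), (‖m t (s + c) ω‖₊ : ENNReal) ^ 2 ∂volume := by
          apply setLIntegral_congr_fun measurableSet_Ioi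
          exact hmeq
      _ = ∫⁻ s in Set.Ioi (2 * ρ + c), (‖m t s ω‖₊ : ENNReal) ^ 2 ∂volume := by
          have hpre : (fun x : ℝ => x + c) ⁻¹' Set.Ioi (2 * ρ + c) = Set.Ioi (2 * ρ) := by
            ext x; simp
          have := (measurePreserving_add_right (volume : Measure ℝ) c).setLIntegral_comp_preimage_emb
            (MeasurableEquiv.addRight c).measurableEmbedding
            (fun s => (‖m t s ω‖₊ : ENNReal) ^ 2) (Set.Ioi (2 * ρ + c))
          rw [hpre] at this
          exact this
      _ ≤ ∫⁻ s, (‖m t s ω‖₊ : ENNReal) ^ 2 ∂volume := setLIntegral_le_lintegral _ _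
  · -- vanishing
    intro tk htk htk1 hzero
    have hmon : ∀ k, (∫⁻ ω, ∫⁻ s in Set.Ioi (2 * ρ),
        (‖m t₁ s ω‖₊ : ENNReal) ^ 2 ∂volume ∂μ) ≤
        ∫⁻ ω, ∫⁻ s, (‖m (tk k) s ω‖₊ : ENNReal) ^ 2 ∂volume ∂μ := by
      intro k
      -- reuse the first part
      apply lintegral_mono
      intro ω
      set t := tk k with htdef
      have ht : t₁ ≤ t := htk1 k
      set c : ℝ := τ ω * (t - t₁) with hc
      have hmeq : ∀ s ∈ Set.Ioi (2 * ρ), (‖m t₁ s ω‖₊ : ENNReal) ^ 2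
          = (‖m t (s + c) ω‖₊ : ENNReal) ^ 2 := by
        intro s hs
        rw [hconst ω s (le_of_lt hs) t ht]
      have hmeasω : Measurable fun s => (‖m t s ω‖₊ : ENNReal) ^ 2 := by
        have : Measurable fun s : ℝ => m t s ω :=
          (hmeas t).comp (measurable_id.prodMk measurable_const)
        exact (this.nnnorm.coe_nnreal_ennreal).pow_const 2
      calc ∫⁻ s in Set.Ioi (2 * ρ), (‖m t₁ s ω‖₊ : ENNReal) ^ 2 ∂volume
          = ∫⁻ s in Set.Ioi (2 * ρ), (‖m t (s + c) ω‖₊ : ENNReal) ^ 2 ∂volume := by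
            apply setLIntegral_congr_fun measurableSet_Ioi
            exact hmeq
        _ = ∫⁻ s in Set.Ioi (2 * ρ + c), (‖m t s ω‖₊ : ENNReal) ^ 2 ∂volume := by
            have hpre : (fun x : ℝ => x + c) ⁻¹' Set.Ioi (2 * ρ + c) = Set.Ioi (2 * ρ) := by
              ext x; simp
            have := (measurePreserving_add_right (volume : Measure ℝ) c).setLIntegral_comp_preimage_emb
              (MeasurableEquiv.addRight c).measurableEmbedding
              (fun s => (‖m t s ω‖₊ : ENNReal) ^ 2) (Set.Ioi (2 * ρ + c))
            rw [hpre] at this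
            exact this
        _ ≤ ∫⁻ s, (‖m t s ω‖₊ : ENNReal) ^ 2 ∂volume := setLIntegral_le_lintegral _ _
    have hI : (∫⁻ ω, ∫⁻ s in Set.Ioi (2 * ρ),
        (‖m t₁ s ω‖₊ : ENNReal) ^ 2 ∂volume ∂μ) = 0 := by
      have hle := ge_of_tendsto hzero (Filter.Eventually.of_forall hmon)
      exact le_antisymm (by simpa using hle) zero_le
    -- measurability of the integrand
    have hF : Measurable (fun p : ℝ × Ω => (‖m t₁ p.1 p.2‖₊ : ENNReal) ^ 2) :=
      ((hmeas t₁).nnnorm.coe_nnreal_ennreal).pow_const 2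
    have houter : Measurable fun ω => ∫⁻ s in Set.Ioi (2 * ρ),
        (‖m t₁ s ω‖₊ : ENNReal) ^ 2 ∂volume :=
      Measurable.lintegral_prod_left' (μ := volume.restrict (Set.Ioi (2 * ρ))) hF
    have hae : ∀ᵐ ω ∂μ, (∫⁻ s in Set.Ioi (2 * ρ),
        (‖m t₁ s ω‖₊ : ENNReal) ^ 2 ∂volume) = 0 :=
      (lintegral_eq_zero_iff houter).mp hI
    filter_upwards [hae] with ω hω
    have hmeasω : Measurable fun s => (‖m t₁ s ω‖₊ : ENNReal) ^ 2 := by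
      have : Measurable fun s : ℝ => m t₁ s ω :=
        (hmeas t₁).comp (measurable_id.prodMk measurable_const)
      exact (this.nnnorm.coe_nnreal_ennreal).pow_const 2
    have := (lintegral_eq_zero_iff hmeasω).mp hω
    filter_upwards [this] with s hs
    simp only [Pi.zero_apply] at hs
    rw [pow_eq_zero_iff (two_ne_zero), ENNReal.coe_eq_zero, nnnorm_eq_zero] at hs
    exact hs
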